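/- If A ∈ sp(V, Ω) satisfies A² = −I, then Aut(V, θ^A) = Sp(V, Ω)^A: every smooth diffeomorphism g: V → V satisfying Ω(g(z) − A(g(z)), Dg_z(v)) = Ω(z − Az, v) for all z, v ∈ V is a linear symplectic automorphism that commutes with A, and conversely every element of Sp(V, Ω) commuting with A preserves θ^A. -/

import Mathlib

set_option maxHeartbeats 1000000 in
/-- If `A ∈ sp(V, Ω)` satisfies `A² = −I`, then `Aut(V, θ^A) = Sp(V, Ω)^A`:
a smooth diffeomorphism `g : V → V` satisfies `Ω(g(z) − A(g(z)), Dg_z(v)) = Ω(z − Az, v)`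
for all `z, v` if and only if `g` is a linear symplectic automorphism commuting with `A`. -/
theorem stmt_8 {V : Type*} [NormedAddCommGroup V] [NormedSpace ℝ V] [FiniteDimensional ℝ V]
    (Ω : V →ₗ[ℝ] V →ₗ[ℝ] ℝ)
    (hΩalt : ∀ x : V, Ω x x = 0)
    (hΩnd : ∀ x : V, (∀ y : V, Ω x y = 0) → x = 0)
    (A : V →ₗ[ℝ] V) (hA : ∀ x y : V, Ω (A x) y + Ω x (A y) = 0)
    (hA2 : A ∘ₗ A = -LinearMap.id)
    (g ginv : V → V) (hg : ContDiff ℝ (⊤ : ℕ∞) g) (hginv : ContDiff ℝ (⊤ : ℕ∞) ginv)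
    (hli : Function.LeftInverse ginv g) (hri : Function.RightInverse ginv g) :
    (∀ z v : V, Ω (g z - A (g z)) (fderiv ℝ g z v) = Ω (z - A z) v) ↔
      (IsLinearMap ℝ g ∧ (∀ x y : V, Ω (g x) (g y) = Ω x y) ∧
        ∀ z : V, g (A z) = A (g z)) := by
  have hA2' : ∀ x : V, A (A x) = -x := by
    intro x
    have := LinearMap.congr_fun hA2 x
    simpa using this
  have hskew : ∀ x y : V, Ω y x = -Ω x y := by
    intro x y
    have h := hΩalt (x + y)
    simp only [map_add, LinearMap.add_apply, hΩalt] at h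
    linarith
  have hbeta : ∀ x y : V, Ω (x - A x) y - Ω (y - A y) x = 2 * Ω x y := by
    intro x y
    have h2 := hA y x
    have h3 := hskew x y
    have h4 := hskew (A x) y
    simp only [map_sub, LinearMap.sub_apply]
    linarith
  constructor
  · intro H
    classical
    -- continuous versions
    set Acl : V →L[ℝ] V := LinearMap.toContinuousLinearMap A with hAcl_def
    have hAcl : ∀ x, Acl x = A x := fun _ => rfl
    set Ω1 : V →ₗ[ℝ] (V →L[ℝ] ℝ) :=
      { toFun := fun x => LinearMap.toContinuousLinearMap (Ω x)
        map_add' := by intro x y; ext w; simp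
        map_smul' := by intro c x; ext w; simp } with hΩ1_def
    set Ωc : V →L[ℝ] V →L[ℝ] ℝ := LinearMap.toContinuousLinearMap Ω1 with hΩc_def
    have hΩc : ∀ x y, Ωc x y = Ω x y := fun _ _ => rfl
    set Bc : V →L[ℝ] V := ContinuousLinearMap.id ℝ V - Acl with hBc_def
    have hBc : ∀ x, Bc x = x - A x := by intro x; simp [hBc_def, hAcl]
    -- differentiability package
    have hgdiff : Differentiable ℝ g := hg.differentiable (by simp)
    have hDg : ∀ y, HasFDerivAt g (fderiv ℝ g y) y := fun y => (hgdiff y).hasFDerivAt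
    have hg' : ContDiff ℝ (⊤ : ℕ∞) (fderiv ℝ g) := hg.fderiv_right (by simp)
    have hg'diff : Differentiable ℝ (fderiv ℝ g) := hg'.differentiable (by simp)
    -- Step 1: pointwise symplecticity
    have hsympt : ∀ z u v : V, Ω (fderiv ℝ g z u) (fderiv ℝ g z v) = Ω u v := by
      have hKder : ∀ (z v u : V),
          Ω (g z) (fderiv ℝ (fderiv ℝ g) z u v) - Ω (A (g z)) (fderiv ℝ (fderiv ℝ g) z u v)
            + (Ω (fderiv ℝ g z u) (fderiv ℝ g z v) - Ω (A (fderiv ℝ g z u)) (fderiv ℝ g z v))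
          = Ω u v - Ω (A u) v := by
        intro z v u
        have hc : HasFDerivAt (fun y => (Ωc.comp Bc) (g y))
            ((Ωc.comp Bc).comp (fderiv ℝ g z)) z :=
          ((Ωc.comp Bc).hasFDerivAt).comp z (hDg z)
        have hq : HasFDerivAt (fun y => fderiv ℝ g y v)
            (((fderiv ℝ g z).comp (0 : V →L[ℝ] V)) + (fderiv ℝ (fderiv ℝ g) z).flip v) z :=
          (hg'diff z).hasFDerivAt.clm_apply (hasFDerivAt_const v z)
        have hK := hc.clm_apply hq
        have heq : (fun y => (Ωc.comp Bc) (g y) (fderiv ℝ g y v))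
            = fun y => ((Ωc.flip v).comp Bc) y := by
          funext y
          have := H y v
          simpa [hΩc, hBc] using this
        rw [heq] at hK
        have hD := hK.unique ((Ωc.flip v).comp Bc).hasFDerivAt
        have hDu := DFunLike.congr_fun hD u
        simpa [hΩc, hBc] using hDu
      intro z u v
      have h1 := hKder z v u
      have h2 := hKder z u v
      have hsymm2 : fderiv ℝ (fderiv ℝ g) z u v = fderiv ℝ (fderiv ℝ g) z v u :=
        second_derivative_symmetric hDg (hg'diff z).hasFDerivAt u v
      rw [hsymm2] at h1
      have hb1 := hbeta (fderiv ℝ g z u) (fderiv ℝ g z v)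
      have hb2 := hbeta u v
      simp only [map_sub, LinearMap.sub_apply] at hb1 hb2
      linarith
    -- Step 2: derivative identity (dagger)
    have hDgsurj : ∀ y : V, Function.Surjective (fderiv ℝ g y) := by
      intro y
      have hgi : Differentiable ℝ ginv := hginv.differentiable (by simp)
      have hcomp : HasFDerivAt (ginv ∘ g) ((fderiv ℝ ginv (g y)).comp (fderiv ℝ g y)) y :=
        (hgi (g y)).hasFDerivAt.comp y (hDg y)
      have hidf : (ginv ∘ g) = id := funext hli
      rw [hidf] at hcomp
      have h := hcomp.unique (hasFDerivAt_id y)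
      have hinj : Function.Injective ((fderiv ℝ g y : V →ₗ[ℝ] V)) := by
        have hleft : Function.LeftInverse (fderiv ℝ ginv (g y)) (fderiv ℝ g y) := by
          intro x
          have := DFunLike.congr_fun h x
          simpa using this
        exact hleft.injective
      exact LinearMap.injective_iff_surjective.mp hinj
    have hdag : ∀ y : V, fderiv ℝ g y (y - A y) = g y - A (g y) := by
      intro y
      have key : ∀ w : V, Ω (g y - A (g y) - fderiv ℝ g y (y - A y)) w = 0 := by
        intro w
        obtain ⟨v, hv⟩ := hDgsurj y w
        have h1 := H y v
        have h2 := hsympt y (y - A y) v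
        rw [← hv, map_sub, LinearMap.sub_apply, h1, h2, sub_self]
      have h0 := hΩnd _ key
      have := sub_eq_zero.mp h0
      exact this.symm
    -- Step 3: flow identity (star)
    have hstar : ∀ (z : V) (s : ℝ),
        (Real.exp (-s) * Real.cos s) •
            g ((Real.exp s * Real.cos s) • z - (Real.exp s * Real.sin s) • A z)
          + (Real.exp (-s) * Real.sin s) •
            A (g ((Real.exp s * Real.cos s) • z - (Real.exp s * Real.sin s) • A z))
          = g z := by
      intro z s
      set φ : ℝ → V := fun t => (Real.exp t * Real.cos t) • z - (Real.exp t * Real.sin t) • A z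
        with hφdef
      have hφ0 : φ 0 = z := by simp [hφdef]
      have hφd : ∀ t, HasDerivAt φ (φ t - A (φ t)) t := by
        intro t
        have hec : HasDerivAt (fun t => Real.exp t * Real.cos t)
            (Real.exp t * Real.cos t - Real.exp t * Real.sin t) t := by
          have h : HasDerivAt (fun t => Real.exp t * Real.cos t) _ t :=
            (Real.hasDerivAt_exp t).mul (Real.hasDerivAt_cos t)
          convert h using 1; ring
        have hes : HasDerivAt (fun t => Real.exp t * Real.sin t)
            (Real.exp t * Real.sin t + Real.exp t * Real.cos t) t := by
          have h : HasDerivAt (fun t => Real.exp t * Real.sin t) _ t :=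
            (Real.hasDerivAt_exp t).mul (Real.hasDerivAt_sin t)
          convert h using 1
        have h : HasDerivAt φ _ t := (hec.smul_const z).sub (hes.smul_const (A z))
        convert h using 1
        simp only [hφdef, map_sub, map_smul, hA2', smul_neg, sub_neg_eq_add]
        module
      have hwd : ∀ t, HasDerivAt (fun t => g (φ t)) (g (φ t) - A (g (φ t))) t := by
        intro t
        have h := (hDg (φ t)).comp_hasDerivAt t (hφd t)
        rwa [hdag (φ t)] at h
      set h : ℝ → V := fun t => (Real.exp (-t) * Real.cos t) • g (φ t)
          + (Real.exp (-t) * Real.sin t) • A (g (φ t)) with hhdef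
      have hhd : ∀ t, HasDerivAt h 0 t := by
        intro t
        have hen : HasDerivAt (fun t : ℝ => Real.exp (-t)) (-Real.exp (-t)) t := by
          have h1 := (Real.hasDerivAt_exp (-t)).comp t (hasDerivAt_neg t)
          simpa [Function.comp_def] using h1
        have hc1 : HasDerivAt (fun t => Real.exp (-t) * Real.cos t)
            (-(Real.exp (-t) * Real.cos t) - Real.exp (-t) * Real.sin t) t := by
          have h1 : HasDerivAt (fun t => Real.exp (-t) * Real.cos t) _ t :=
            hen.mul (Real.hasDerivAt_cos t)
          convert h1 using 1; ring
        have hc2 : HasDerivAt (fun t => Real.exp (-t) * Real.sin t)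
            (-(Real.exp (-t) * Real.sin t) + Real.exp (-t) * Real.cos t) t := by
          have h1 : HasDerivAt (fun t => Real.exp (-t) * Real.sin t) _ t :=
            hen.mul (Real.hasDerivAt_sin t)
          convert h1 using 1; ring
        have hAw : HasDerivAt (fun t => A (g (φ t)))
            (A (g (φ t)) - A (A (g (φ t)))) t := by
          have h1 := Acl.hasFDerivAt.comp_hasDerivAt t (hwd t)
          simpa [map_sub, hAcl, Function.comp_def] using h1
        have h' : HasDerivAt h _ t := (hc1.smul (hwd t)).add (hc2.smul hAw)
        convert h' using 1
        simp only [hA2', smul_neg, sub_neg_eq_add]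
        module
      have hdiffh : Differentiable ℝ h := fun t => (hhd t).differentiableAt
      have hconst : h s = h 0 := is_const_of_deriv_eq_zero hdiffh (fun t => (hhd t).deriv) s 0
      have hh0 : h 0 = g z := by simp [hhdef, hφ0]
      rw [hh0] at hconst
      simpa [hhdef, hφdef] using hconst
    -- Step 4
    have hg0 : g 0 = 0 := by
      have h := hstar 0 Real.pi
      have harg : (Real.exp Real.pi * Real.cos Real.pi) • (0 : V)
          - (Real.exp Real.pi * Real.sin Real.pi) • A 0 = 0 := by simp
      rw [harg, Real.cos_pi, Real.sin_pi] at h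
      have h3 : (Real.exp (-Real.pi) * -1) • g 0 + (Real.exp (-Real.pi) * 0) • A (g 0) - g 0
          = 0 := sub_eq_zero.mpr h
      have e1 : (Real.exp (-Real.pi) * -1) • g 0 + (Real.exp (-Real.pi) * 0) • A (g 0) - g 0
          = -((1 + Real.exp (-Real.pi)) • g 0) := by module
      rw [e1] at h3
      have h4 : (1 + Real.exp (-Real.pi)) • g 0 = 0 := neg_eq_zero.mp h3
      have hne : (1 + Real.exp (-Real.pi)) ≠ 0 := by positivity
      rcases smul_eq_zero.mp h4 with h5 | h5
      · exact absurd h5 hne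
      · exact h5
    set L : V →L[ℝ] V := fderiv ℝ g 0 with hLdef
    -- Step 5
    have hLA : ∀ x : V, L (A x) = A (L x) := by
      have hALA : ∀ x : V, A (L (A x)) = -(L x) := by
        intro x
        set s : ℝ := Real.pi / 2 with hsdef
        set a : ℝ := Real.exp (-s) * Real.cos s with hadef
        set b : ℝ := Real.exp (-s) * Real.sin s with hbdef
        set Φ : V →L[ℝ] V := (Real.exp s * Real.cos s) • ContinuousLinearMap.id ℝ V
            - (Real.exp s * Real.sin s) • Acl with hΦdef
        have hΦapp : ∀ y, Φ y = (Real.exp s * Real.cos s) • y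
            - (Real.exp s * Real.sin s) • A y := by
          intro y
          simp [hΦdef, hAcl]
        have hΦ0 : Φ 0 = 0 := by rw [hΦapp]; simp
        have hgΦ : HasFDerivAt (fun y => g (Φ y)) (L.comp Φ) 0 := by
          have h1 := (hDg (Φ 0)).comp 0 Φ.hasFDerivAt
          rw [hΦ0] at h1
          exact h1
        have hAgΦ : HasFDerivAt (fun y => A (g (Φ y))) (Acl.comp (L.comp Φ)) 0 := by
          have h1 := Acl.hasFDerivAt.comp (0 : V) hgΦ
          simpa [Function.comp_def, hAcl] using h1
        have hF : HasFDerivAt (fun y => a • g (Φ y) + b • A (g (Φ y)))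
            (a • (L.comp Φ) + b • (Acl.comp (L.comp Φ))) 0 :=
          ((hgΦ.const_smul a).add (hAgΦ.const_smul b))
        have hev : (fun y => a • g (Φ y) + b • A (g (Φ y))) = g := by
          funext y
          rw [hΦapp y]
          exact hstar y s
        rw [hev] at hF
        have hL2 : a • (L.comp Φ) + b • (Acl.comp (L.comp Φ)) = L := hF.unique (hDg 0)
        have hx := DFunLike.congr_fun hL2 x
        have hca : Real.cos s = 0 := by rw [hsdef]; exact Real.cos_pi_div_two
        have hsa : Real.sin s = 1 := by rw [hsdef]; exact Real.sin_pi_div_two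
        have hee : Real.exp (-s) * Real.exp s = 1 := by
          rw [← Real.exp_add]; simp
        simp only [ContinuousLinearMap.add_apply, ContinuousLinearMap.smul_apply,
          ContinuousLinearMap.coe_comp', Function.comp_apply, hAcl] at hx
        rw [hΦapp x, hadef, hbdef, hca, hsa] at hx
        simp only [mul_zero, zero_mul, mul_one, zero_smul, smul_zero, zero_sub, zero_add,
          map_neg, map_smul, smul_neg, smul_smul, hee, one_smul, neg_zero, add_zero] at hx
        exact neg_eq_iff_eq_neg.mp hx
      intro x
      have h1 := hALA (A x)
      rw [hA2' x] at h1
      simp only [map_neg] at h1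
      exact (neg_inj.mp h1).symm
    -- Step 6
    have hgL : ∀ z : V, g z = L z := by
      have hlo : (fun w : V => g w - L w) =o[nhds 0] (fun w : V => w) := by
        have h1 := hasFDerivAt_iff_isLittleO_nhds_zero.mp (hDg 0)
        simpa [hg0, hLdef] using h1
      set C : ℝ := 1 + ‖Acl‖ with hCdef
      have hC0 : 0 < C := by positivity
      have hAle : ∀ x : V, ‖A x‖ ≤ ‖Acl‖ * ‖x‖ := fun x => Acl.le_opNorm x
      have habs1 : ∀ s : ℝ, |Real.exp s * Real.cos s| ≤ Real.exp s := by
        intro s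
        rw [abs_mul, abs_of_pos (Real.exp_pos s)]
        exact mul_le_of_le_one_right (Real.exp_pos s).le (Real.abs_cos_le_one s)
      have habs2 : ∀ s : ℝ, |Real.exp s * Real.sin s| ≤ Real.exp s := by
        intro s
        rw [abs_mul, abs_of_pos (Real.exp_pos s)]
        exact mul_le_of_le_one_right (Real.exp_pos s).le (Real.abs_sin_le_one s)
      have hphib : ∀ (s : ℝ) (x : V),
          ‖(Real.exp s * Real.cos s) • x - (Real.exp s * Real.sin s) • A x‖
            ≤ Real.exp s * (C * ‖x‖) := by
        intro s x
        calc ‖(Real.exp s * Real.cos s) • x - (Real.exp s * Real.sin s) • A x‖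
            ≤ ‖(Real.exp s * Real.cos s) • x‖ + ‖(Real.exp s * Real.sin s) • A x‖ :=
              norm_sub_le _ _
          _ = |Real.exp s * Real.cos s| * ‖x‖ + |Real.exp s * Real.sin s| * ‖A x‖ := by
              rw [norm_smul, norm_smul, Real.norm_eq_abs, Real.norm_eq_abs]
          _ ≤ Real.exp s * ‖x‖ + Real.exp s * (‖Acl‖ * ‖x‖) := by
              refine add_le_add ?_ ?_
              · exact mul_le_mul_of_nonneg_right (habs1 s) (norm_nonneg x)
              · exact mul_le_mul (habs2 s) (hAle x) (norm_nonneg _) (Real.exp_pos s).le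
          _ = Real.exp s * (C * ‖x‖) := by rw [hCdef]; ring
      have hpsib : ∀ (s : ℝ) (x : V),
          ‖(Real.exp (-s) * Real.cos s) • x + (Real.exp (-s) * Real.sin s) • A x‖
            ≤ Real.exp (-s) * (C * ‖x‖) := by
        intro s x
        have habs1' : |Real.exp (-s) * Real.cos s| ≤ Real.exp (-s) := by
          rw [abs_mul, abs_of_pos (Real.exp_pos (-s))]
          exact mul_le_of_le_one_right (Real.exp_pos (-s)).le (Real.abs_cos_le_one s)
        have habs2' : |Real.exp (-s) * Real.sin s| ≤ Real.exp (-s) := by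
          rw [abs_mul, abs_of_pos (Real.exp_pos (-s))]
          exact mul_le_of_le_one_right (Real.exp_pos (-s)).le (Real.abs_sin_le_one s)
        calc ‖(Real.exp (-s) * Real.cos s) • x + (Real.exp (-s) * Real.sin s) • A x‖
            ≤ ‖(Real.exp (-s) * Real.cos s) • x‖ + ‖(Real.exp (-s) * Real.sin s) • A x‖ :=
              norm_add_le _ _
          _ = |Real.exp (-s) * Real.cos s| * ‖x‖ + |Real.exp (-s) * Real.sin s| * ‖A x‖ := by
              rw [norm_smul, norm_smul, Real.norm_eq_abs, Real.norm_eq_abs]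
          _ ≤ Real.exp (-s) * ‖x‖ + Real.exp (-s) * (‖Acl‖ * ‖x‖) := by
              refine add_le_add ?_ ?_
              · exact mul_le_mul_of_nonneg_right habs1' (norm_nonneg x)
              · exact mul_le_mul habs2' (hAle x) (norm_nonneg _) (Real.exp_pos (-s)).le
          _ = Real.exp (-s) * (C * ‖x‖) := by rw [hCdef]; ring
      intro z
      have hsuff : ∀ ε : ℝ, 0 < ε → ‖g z - L z‖ ≤ ε * (C * (C * ‖z‖)) := by
        intro ε hε
        obtain ⟨δ, hδ0, hδ⟩ := Metric.eventually_nhds_iff.mp (hlo.def hε)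
        set s : ℝ := Real.log (δ / (C * ‖z‖ + 1)) with hsdef
        have hden : 0 < C * ‖z‖ + 1 := by positivity
        have hexps : Real.exp s = δ / (C * ‖z‖ + 1) :=
          Real.exp_log (by positivity)
        have hee : Real.exp (-s) * Real.exp s = 1 := by rw [← Real.exp_add]; simp
        set w : V := (Real.exp s * Real.cos s) • z - (Real.exp s * Real.sin s) • A z with hwdef
        have hwb : ‖w‖ ≤ Real.exp s * (C * ‖z‖) := hphib s z
        have hwsmall : dist w 0 < δ := by
          rw [dist_zero_right]
          have h2 : Real.exp s * (C * ‖z‖) < δ := by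
            rw [hexps, div_mul_eq_mul_div, div_lt_iff₀ hden]
            have hz' : 0 ≤ C * ‖z‖ := by positivity
            nlinarith
          exact lt_of_le_of_lt hwb h2
        have hw := hδ hwsmall
        -- identity : combinations
        have hgz : (Real.exp (-s) * Real.cos s) • g w + (Real.exp (-s) * Real.sin s) • A (g w)
            = g z := by rw [hwdef]; exact hstar z s
        have hLz : (Real.exp (-s) * Real.cos s) • L w + (Real.exp (-s) * Real.sin s) • A (L w)
            = L z := by
          have hcs : Real.sin s ^ 2 + Real.cos s ^ 2 = 1 := Real.sin_sq_add_cos_sq s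
          rw [hwdef]
          simp only [map_sub, map_smul, hLA z, hA2']
          match_scalars
          · linear_combination (Real.cos s ^ 2 + Real.sin s ^ 2) * hee + hcs
          · ring
        have hkey : g z - L z
            = (Real.exp (-s) * Real.cos s) • (g w - L w)
              + (Real.exp (-s) * Real.sin s) • A (g w - L w) := by
          rw [← hgz, ← hLz]
          simp only [map_sub, smul_sub]
          abel
        calc ‖g z - L z‖
            = ‖(Real.exp (-s) * Real.cos s) • (g w - L w)
                + (Real.exp (-s) * Real.sin s) • A (g w - L w)‖ := by rw [hkey]
          _ ≤ Real.exp (-s) * (C * ‖g w - L w‖) := hpsib s (g w - L w)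
          _ ≤ Real.exp (-s) * (C * (ε * ‖w‖)) := by
              have : ‖g w - L w‖ ≤ ε * ‖w‖ := by simpa using hw
              gcongr
          _ ≤ Real.exp (-s) * (C * (ε * (Real.exp s * (C * ‖z‖)))) := by gcongr
          _ = ε * (C * (C * ‖z‖)) * (Real.exp (-s) * Real.exp s) := by ring
          _ = ε * (C * (C * ‖z‖)) := by rw [hee, mul_one]
      by_contra hne
      have hpos : 0 < ‖g z - L z‖ := by
        rw [norm_pos_iff]
        exact sub_ne_zero.mpr hne
      set Q : ℝ := C * (C * ‖z‖) with hQdef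
      have hQ0 : 0 < Q := by
        have hz0 : z ≠ 0 := by
          intro hz
          apply hne
          rw [hz, hg0, map_zero]
        have : 0 < ‖z‖ := norm_pos_iff.mpr hz0
        positivity
      have h := hsuff (‖g z - L z‖ / (2 * Q)) (by positivity)
      rw [div_mul_eq_mul_div] at h
      have h2 : ‖g z - L z‖ * Q / (2 * Q) = ‖g z - L z‖ / 2 := by
        field_simp
      rw [h2] at h
      linarith
    -- assembly
    have hlin : IsLinearMap ℝ g := by
      constructor
      · intro x y; rw [hgL, hgL, hgL, map_add]
      · intro c x; rw [hgL, hgL, map_smul]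
    refine ⟨hlin, ?_, ?_⟩
    · intro x y
      have h := hsympt 0 x y
      rwa [← hgL x, ← hgL y] at h
    · intro z
      rw [hgL (A z), hgL z, hLA z]
  · rintro ⟨hlin, hsymp, hcomm⟩ z v
    set G : V →L[ℝ] V := LinearMap.toContinuousLinearMap (IsLinearMap.mk' g hlin) with hGdef
    have hgc : g = ⇑G := by ext x; rfl
    have hfd : fderiv ℝ g z = G := by
      conv_lhs => rw [hgc]
      exact G.fderiv
    have hGv : G v = g v := rfl
    rw [hfd]
    calc Ω (g z - A (g z)) (G v)
        = Ω (g z) (g v) - Ω (A (g z)) (g v) := by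
          rw [hGv]; simp [map_sub, LinearMap.sub_apply]
      _ = Ω z v - Ω (A z) v := by rw [hsymp z v, ← hcomm z, hsymp (A z) v]
      _ = Ω (z - A z) v := by simp [map_sub, LinearMap.sub_apply]
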